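/- There exists a positive constant K = K(H_1, H_2), depending only on H_1 and H_2, such that for every n ≥ 0, almost surely |𝔼[ΔM_{n+1}/T_{n+1} | ℱ_n]| ≤ K / T_n². -/

import Mathlib

open MeasureTheory Filter Set

set_option maxHeartbeats 2000000 in
/-- There is a constant K = K(H1,H2) > 0 with
|𝔼[ΔM_{n+1}/T_{n+1} | ℱ_n]| ≤ K / T_n² almost surely. -/
theorem conditional_mean_increment_bound
    (H11 H12 H21 H22 : ℝ)
    (hH11 : 0 ≤ H11) (hH22 : 0 ≤ H22) (hH12 : 0 < H12) (hH21 : 0 < H21)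
    (H1 H2 : ℝ) (hH1 : H1 = H11 + H21) (hH2 : H2 = H12 + H22) (hHne : H1 ≠ H2)
    (f : ℝ → ℝ)
    (hf_cont : ContinuousOn f (Set.Icc 0 1))
    (hf_mono : MonotoneOn f (Set.Icc 0 1))
    (hf_diff : DifferentiableOn ℝ f (Set.Icc 0 1))
    (hf0 : f 0 = 0) (hf1 : f 1 = 1)
    (hf_pos : ∀ x ∈ Set.Ioc (0:ℝ) 1, 0 < f x)
    {Ω : Type*} {m0 : MeasurableSpace Ω} {ℙ : Measure Ω} [IsProbabilityMeasure ℙ]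
    (ℱ : Filtration ℕ m0)
    (X : ℕ → Ω → Bool)
    (hX_meas : ∀ n : ℕ, Measurable[ℱ (n + 1)] (X (n + 1)))
    (Y1 Y2 : ℕ → Ω → ℝ)
    (hY1_meas : ∀ n : ℕ, Measurable[ℱ n] (Y1 n))
    (hY2_meas : ∀ n : ℕ, Measurable[ℱ n] (Y2 n))
    (hY1_ge : ∀ n ω, 1 ≤ Y1 n ω) (hY2_ge : ∀ n ω, 1 ≤ Y2 n ω)
    (T : ℕ → Ω → ℝ) (hT : ∀ n ω, T n ω = Y1 n ω + Y2 n ω)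
    (hdraw1 : ∀ n : ℕ,
      ℙ[(fun ω => if X (n + 1) ω then (1 : ℝ) else 0) | ℱ n]
        =ᵐ[ℙ] fun ω => f (Y1 n ω / T n ω) / (f (Y1 n ω / T n ω) + f (Y2 n ω / T n ω)))
    (hdraw2 : ∀ n : ℕ,
      ℙ[(fun ω => if X (n + 1) ω then (0 : ℝ) else 1) | ℱ n]
        =ᵐ[ℙ] fun ω => f (Y2 n ω / T n ω) / (f (Y1 n ω / T n ω) + f (Y2 n ω / T n ω)))
    (hupd1 : ∀ n ω, Y1 (n + 1) ω = Y1 n ω + (if X (n + 1) ω then H11 else H12))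
    (hupd2 : ∀ n ω, Y2 (n + 1) ω = Y2 n ω + (if X (n + 1) ω then H21 else H22))
    (Z : ℕ → Ω → ℝ) (hZ : ∀ n ω, Z n ω = Y1 n ω / T n ω)
    (L : ℕ → Ω → ℝ)
    (hL : ∀ n ω, L (n + 1) ω =
      if X (n + 1) ω then H11 - Z n ω * H1 else H12 - Z n ω * H2)
    (ΔM : ℕ → Ω → ℝ)
    (hΔM : ∀ n : ℕ, ΔM (n + 1) = L (n + 1) - ℙ[L (n + 1) | ℱ n]) :
    ∃ K > 0, ∀ n : ℕ, ∀ᵐ ω ∂ℙ,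
      |(ℙ[fun ω' => ΔM (n + 1) ω' / T (n + 1) ω' | ℱ n]) ω| ≤ K / (T n ω) ^ 2 := by
  classical
  clear hdraw1 hdraw2 hf_cont hf_mono hf_diff hf0 hf1 hf_pos
  set C : ℝ := |H11| + |H12| + |H1| + |H2| with hCdef
  set D : ℝ := |H1| + |H2| with hDdef
  have hH1pos : 0 < H1 := by rw [hH1]; linarith
  have hH2pos : 0 < H2 := by rw [hH2]; linarith
  have hCpos : 0 < C := by
    have : 0 < |H1| := abs_pos.2 (ne_of_gt hH1pos)
    have h0 : 0 ≤ |H11| := abs_nonneg _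
    have h1 : 0 ≤ |H12| := abs_nonneg _
    have h2 : 0 ≤ |H2| := abs_nonneg _
    rw [hCdef]; linarith
  have hDnn : 0 ≤ D := by rw [hDdef]; positivity
  refine ⟨2 * C * D + 1, by nlinarith, ?_⟩
  intro n
  set K : ℝ := 2 * C * D + 1 with hKdef
  have hm : ℱ n ≤ m0 := ℱ.le n
  -- basic pointwise facts
  have hT2 : ∀ ω, 2 ≤ T n ω := fun ω => by
    rw [hT]; linarith [hY1_ge n ω, hY2_ge n ω]
  have hTpos : ∀ ω, 0 < T n ω := fun ω => by linarith [hT2 ω]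
  have hTsucc : ∀ ω, T (n + 1) ω = T n ω + (if X (n + 1) ω then H1 else H2) := fun ω => by
    rw [hT (n + 1) ω, hupd1, hupd2, hT n ω]
    split_ifs <;> [rw [hH1]; rw [hH2]] <;> ring
  have hTle : ∀ ω, T n ω ≤ T (n + 1) ω := fun ω => by
    rw [hTsucc ω]; split_ifs <;> linarith
  have hT1pos : ∀ ω, 0 < T (n + 1) ω := fun ω => lt_of_lt_of_le (hTpos ω) (hTle ω)
  have hZ0 : ∀ ω, 0 ≤ Z n ω := fun ω => by
    rw [hZ]; exact div_nonneg (by linarith [hY1_ge n ω]) (le_of_lt (hTpos ω))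
  have hZ1 : ∀ ω, Z n ω ≤ 1 := fun ω => by
    rw [hZ, div_le_one (hTpos ω), hT]; linarith [hY2_ge n ω]
  have hLbd : ∀ ω, |L (n + 1) ω| ≤ C := fun ω => by
    rw [hL n ω]
    have hz1 : |Z n ω * H1| ≤ |H1| := by
      rw [abs_mul]
      have : |Z n ω| ≤ 1 := abs_le.2 ⟨by linarith [hZ0 ω], hZ1 ω⟩
      nlinarith [abs_nonneg H1]
    have hz2 : |Z n ω * H2| ≤ |H2| := by
      rw [abs_mul]
      have : |Z n ω| ≤ 1 := abs_le.2 ⟨by linarith [hZ0 ω], hZ1 ω⟩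
      nlinarith [abs_nonneg H2]
    have h0 : 0 ≤ |H11| := abs_nonneg _
    have h1 : 0 ≤ |H12| := abs_nonneg _
    have h2 : 0 ≤ |H1| := abs_nonneg _
    have h3 : 0 ≤ |H2| := abs_nonneg _
    split_ifs with hx
    · calc |H11 - Z n ω * H1| ≤ |H11| + |Z n ω * H1| := abs_sub _ _
        _ ≤ C := by rw [hCdef]; linarith
    · calc |H12 - Z n ω * H2| ≤ |H12| + |Z n ω * H2| := abs_sub _ _
        _ ≤ C := by rw [hCdef]; linarith
  -- measurability
  have hTn_meas : Measurable[ℱ n] (T n) := by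
    have : T n = fun ω => Y1 n ω + Y2 n ω := funext (hT n)
    rw [this]; exact (hY1_meas n).add (hY2_meas n)
  have hZn_meas : Measurable[ℱ n] (Z n) := by
    have : Z n = fun ω => Y1 n ω / T n ω := funext (hZ n)
    rw [this]; exact (hY1_meas n).div hTn_meas
  have hXset : MeasurableSet[ℱ (n + 1)] {ω | X (n + 1) ω = true} :=
    hX_meas n (measurableSet_singleton true)
  have hZn_meas' : Measurable[ℱ (n + 1)] (Z n) := hZn_meas.mono (ℱ.mono n.le_succ) le_rfl
  have hL_meas : Measurable[ℱ (n + 1)] (L (n + 1)) := by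
    have : L (n + 1) = fun ω =>
        if X (n + 1) ω then H11 - Z n ω * H1 else H12 - Z n ω * H2 := funext (hL n)
    rw [this]
    exact Measurable.ite hXset (measurable_const.sub (hZn_meas'.mul_const _))
      (measurable_const.sub (hZn_meas'.mul_const _))
  have hL_meas0 : Measurable (L (n + 1)) := hL_meas.mono (ℱ.le (n + 1)) le_rfl
  have hT1_meas : Measurable (T (n + 1)) := by
    have : T (n + 1) = fun ω => T n ω + (if X (n + 1) ω then H1 else H2) := funext hTsucc
    rw [this]
    exact ((hTn_meas.mono (ℱ.mono n.le_succ) le_rfl).add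
      (Measurable.ite hXset measurable_const measurable_const)).mono (ℱ.le (n + 1)) le_rfl
  have hTn_meas0 : Measurable (T n) := hTn_meas.mono hm le_rfl
  -- integrability
  have hL_int : Integrable (L (n + 1)) ℙ := by
    refine Integrable.mono' (integrable_const C) hL_meas0.aestronglyMeasurable
      (ae_of_all _ fun ω => ?_)
    rw [Real.norm_eq_abs]; exact hLbd ω
  have hμL_int : Integrable (ℙ[L (n + 1) | ℱ n]) ℙ := integrable_condExp
  have hΔM_int : Integrable (ΔM (n + 1)) ℙ := by rw [hΔM n]; exact hL_int.sub hμL_int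
  have hΔM_meas : AEStronglyMeasurable (ΔM (n + 1)) ℙ := hΔM_int.aestronglyMeasurable
  -- a.e. bound on ΔM
  have hμL_ub : ∀ᵐ ω ∂ℙ, (ℙ[L (n + 1) | ℱ n]) ω ≤ C := by
    have h1 : ℙ[L (n + 1) | ℱ n] ≤ᵐ[ℙ] ℙ[(fun _ => C) | ℱ n] :=
      condExp_mono hL_int (integrable_const C) (ae_of_all _ fun ω => (abs_le.1 (hLbd ω)).2)
    rw [condExp_const hm] at h1
    exact h1
  have hμL_lb : ∀ᵐ ω ∂ℙ, -C ≤ (ℙ[L (n + 1) | ℱ n]) ω := by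
    have h1 : ℙ[(fun _ => -C) | ℱ n] ≤ᵐ[ℙ] ℙ[L (n + 1) | ℱ n] :=
      condExp_mono (integrable_const (-C)) hL_int (ae_of_all _ fun ω => (abs_le.1 (hLbd ω)).1)
    rw [condExp_const hm] at h1
    exact h1
  have hΔMbd : ∀ᵐ ω ∂ℙ, |ΔM (n + 1) ω| ≤ 2 * C := by
    filter_upwards [hμL_ub, hμL_lb] with ω h1 h2
    have hω : ΔM (n + 1) ω = L (n + 1) ω - (ℙ[L (n + 1) | ℱ n]) ω := by
      rw [hΔM n]; rfl
    rw [hω]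
    have := hLbd ω
    rw [abs_le] at this ⊢
    constructor <;> linarith [this.1, this.2]
  -- decomposition
  set g : Ω → ℝ := fun ω => (T n ω)⁻¹ * ΔM (n + 1) ω with hgdef
  set R : Ω → ℝ := fun ω => ((T (n + 1) ω)⁻¹ - (T n ω)⁻¹) * ΔM (n + 1) ω with hRdef
  have hsplit : (fun ω' => ΔM (n + 1) ω' / T (n + 1) ω') = g + R := by
    funext ω
    simp only [Pi.add_apply, hgdef, hRdef, div_eq_mul_inv]
    ring
  have hg_int : Integrable g ℙ := by
    refine hΔM_int.bdd_mul (hTn_meas0.inv.aestronglyMeasurable) (c := 1) (ae_of_all _ fun ω => ?_)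
    rw [Real.norm_eq_abs, abs_inv, abs_of_pos (hTpos ω)]
    rw [inv_le_one_iff₀]  -- maybe wrong name
    right; linarith [hT2 ω]
  have hR_int : Integrable R ℙ := by
    refine hΔM_int.bdd_mul ((hT1_meas.inv.sub hTn_meas0.inv).aestronglyMeasurable) (c := 1) (ae_of_all _ fun ω => ?_)
    have h1 : 0 < (T n ω)⁻¹ := inv_pos.2 (hTpos ω)
    have h2 : 0 < (T (n + 1) ω)⁻¹ := inv_pos.2 (hT1pos ω)
    have h3 : (T n ω)⁻¹ ≤ 1 := by
      rw [inv_le_one_iff₀]; right; linarith [hT2 ω]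
    have h4 : (T (n + 1) ω)⁻¹ ≤ (T n ω)⁻¹ :=
      inv_anti₀ (hTpos ω) (hTle ω)
    rw [Real.norm_eq_abs, abs_le]
    constructor <;> linarith
  -- conditional expectation computations
  have hzero : ℙ[ΔM (n + 1) | ℱ n] =ᵐ[ℙ] 0 := by
    rw [hΔM n]
    calc ℙ[L (n + 1) - ℙ[L (n + 1) | ℱ n] | ℱ n]
        =ᵐ[ℙ] ℙ[L (n + 1) | ℱ n] - ℙ[ℙ[L (n + 1) | ℱ n] | ℱ n] := condExp_sub hL_int hμL_int _
      _ = ℙ[L (n + 1) | ℱ n] - ℙ[L (n + 1) | ℱ n] := by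
          rw [condExp_of_stronglyMeasurable hm stronglyMeasurable_condExp hμL_int]
      _ = 0 := sub_self _
  have hg0 : ℙ[g | ℱ n] =ᵐ[ℙ] 0 := by
    have hmul := condExp_mul_of_stronglyMeasurable_left (m := ℱ n) (μ := ℙ)
      (f := fun ω => (T n ω)⁻¹) (g := ΔM (n + 1))
      hTn_meas.inv.stronglyMeasurable hg_int hΔM_int
    filter_upwards [hmul, hzero] with ω h1 h2
    have : (ℙ[g | ℱ n]) ω = (T n ω)⁻¹ * (ℙ[ΔM (n + 1) | ℱ n]) ω := h1
    rw [Pi.zero_apply] at h2 ⊢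
    rw [this, h2, mul_zero]
  -- bound |R| ≤ K / Tn^2
  set h : Ω → ℝ := fun ω => K / (T n ω) ^ 2 with hhdef
  have hKpos : 0 < K := by rw [hKdef]; nlinarith
  have hRbd : ∀ᵐ ω ∂ℙ, |R ω| ≤ h ω := by
    filter_upwards [hΔMbd] with ω hb
    set a := T n ω with ha
    set b := T (n + 1) ω with hbdef
    have h2a : 2 ≤ a := hT2 ω
    have hab : a ≤ b := hTle ω
    have hapos : 0 < a := hTpos ω
    have hbpos : 0 < b := hT1pos ω
    have hd : b - a ≤ D := by
      rw [hbdef, hTsucc ω, ← ha]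
      have h1 : H1 ≤ |H1| := le_abs_self _
      have h2 : H2 ≤ |H2| := le_abs_self _
      have h3 : 0 ≤ |H1| := abs_nonneg _
      have h4 : 0 ≤ |H2| := abs_nonneg _
      split_ifs <;> rw [hDdef] <;> linarith
    have hφ : |b⁻¹ - a⁻¹| ≤ D / a ^ 2 := by
      have heq : a⁻¹ - b⁻¹ = (b - a) / (a * b) := by
        field_simp
      have hle : (b - a) / (a * b) ≤ D / a ^ 2 := by
        apply div_le_div₀ hDnn hd (by positivity)
        nlinarith
      rw [abs_sub_comm, abs_of_nonneg (by nlinarith [inv_anti₀ hapos hab] : (0:ℝ) ≤ a⁻¹ - b⁻¹), heq]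
      exact hle
    have : |R ω| = |b⁻¹ - a⁻¹| * |ΔM (n + 1) ω| := by
      rw [hRdef, abs_mul]
    rw [this, hhdef]
    calc |b⁻¹ - a⁻¹| * |ΔM (n + 1) ω| ≤ (D / a ^ 2) * (2 * C) :=
          mul_le_mul hφ hb (abs_nonneg _) (div_nonneg hDnn (by positivity))
      _ = 2 * C * D / a ^ 2 := by ring
      _ ≤ K / a ^ 2 := by
          rw [hKdef]
          gcongr
          linarith
  have hh_meas : StronglyMeasurable[ℱ n] h :=
    (measurable_const.div (hTn_meas.pow_const 2)).stronglyMeasurable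
  have hh_int : Integrable h ℙ := by
    refine Integrable.mono' (integrable_const K)
      ((hh_meas.mono hm).aestronglyMeasurable) (ae_of_all _ fun ω => ?_)
    have h4 : (1:ℝ) ≤ (T n ω) ^ 2 := by nlinarith [hT2 ω]
    rw [Real.norm_eq_abs, hhdef, abs_of_nonneg (div_nonneg hKpos.le (by positivity))]
    rw [div_le_iff₀ (by positivity)]
    nlinarith [hKpos.le]
  have hupper : ℙ[R | ℱ n] ≤ᵐ[ℙ] h := by
    have h1 := condExp_mono (m := ℱ n) hR_int hh_int (hRbd.mono fun ω hω => (abs_le.1 hω).2)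
    rwa [condExp_of_stronglyMeasurable hm hh_meas hh_int] at h1
  have hlower : -h ≤ᵐ[ℙ] ℙ[R | ℱ n] := by
    have h1 := condExp_mono (m := ℱ n) hh_int.neg hR_int
      (hRbd.mono fun ω hω => by
        have := (abs_le.1 hω).1
        simpa using this)
    rwa [condExp_of_stronglyMeasurable hm hh_meas.neg hh_int.neg] at h1
  have hsum : ℙ[fun ω' => ΔM (n + 1) ω' / T (n + 1) ω' | ℱ n] =ᵐ[ℙ] ℙ[g | ℱ n] + ℙ[R | ℱ n] := by
    rw [hsplit]; exact condExp_add hg_int hR_int _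
  filter_upwards [hsum, hg0, hupper, hlower] with ω h1 h2 h3 h4
  rw [h1, Pi.add_apply, h2, Pi.zero_apply, zero_add]
  have : |(ℙ[R | ℱ n]) ω| ≤ h ω := abs_le.2 ⟨by simpa using h4, h3⟩
  simpa [hhdef] using this
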